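/- Let β > 1 be a Pisot number and ξ ∈ Q(β) such that Tr(aξ) ∈ Z for all a ∈ Z[β]. Then ||ξβⁿ|| → 0 exponentially as n → +∞, where ||·|| denotes distance to the nearest integer. -/

import Mathlib

set_option maxHeartbeats 1000000

open IntermediateField Finset


/-- let `β > 1` be a Pisot number (an algebraic integer all of whose other
Galois conjugates have modulus `< 1`) and let `ξ ∈ ℚ(β)` satisfy `Tr(aξ) ∈ ℤ` for all
`a ∈ ℤ[β]`. Then `‖ξβⁿ‖` (distance to the nearest integer) tends to `0` exponentially. -/
theorem pisot_trace_dual_decay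
    (β : ℝ) (hβ1 : 1 < β) (hint : IsIntegral ℤ β)
    (hconj : ∀ z : ℂ, ((minpoly ℤ β).map (Int.castRingHom ℂ)).IsRoot z →
      z ≠ (β : ℂ) → ‖z‖ < 1)
    (ξ : ℝ) (hξ : ξ ∈ IntermediateField.adjoin ℚ ({β} : Set ℝ))
    (htr : ∀ a : IntermediateField.adjoin ℚ ({β} : Set ℝ),
      (a : ℝ) ∈ Algebra.adjoin ℤ ({β} : Set ℝ) →
      ∃ m : ℤ, Algebra.trace ℚ (IntermediateField.adjoin ℚ ({β} : Set ℝ))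
        (a * ⟨ξ, hξ⟩) = (m : ℚ)) :
    ∃ C r : ℝ, 0 < C ∧ 0 ≤ r ∧ r < 1 ∧
      ∀ n : ℕ, |ξ * β ^ n - (round (ξ * β ^ n) : ℝ)| ≤ C * r ^ n := by
  classical
  have hβQ : IsIntegral ℚ β := hint.tower_top
  set K := IntermediateField.adjoin ℚ ({β} : Set ℝ) with hK
  have : FiniteDimensional ℚ K := IntermediateField.adjoin.finiteDimensional hβQ
  set b : K := IntermediateField.AdjoinSimple.gen ℚ β with hb
  set x : K := (⟨ξ, hξ⟩ : K) with hx
  set σ0 : K →ₐ[ℚ] ℂ := (Complex.ofRealAm.restrictScalars ℚ).comp K.val with hσ0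
  have hσ0b : σ0 b = (β : ℂ) := rfl
  -- every embedding sends b to a root of the minpoly over ℂ
  have hroot : ∀ σ : K →ₐ[ℚ] ℂ, ((minpoly ℤ β).map (Int.castRingHom ℂ)).IsRoot (σ b) := by
    intro σ
    have h1 : minpoly ℚ β = (minpoly ℤ β).map (Int.castRingHom ℚ) :=
      minpoly.isIntegrallyClosed_eq_field_fractions' ℚ hint
    have h2 : Polynomial.aeval (σ b) (minpoly ℚ b) = 0 := by
      rw [Polynomial.aeval_algHom_apply, minpoly.aeval, map_zero]
    rw [show minpoly ℚ b = minpoly ℚ β from IntermediateField.minpoly_gen (F := ℚ) β, h1] at h2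
    rw [Polynomial.aeval_def, Polynomial.eval₂_map] at h2
    rw [Polynomial.IsRoot, Polynomial.eval_map]
    convert h2 using 2
    exact RingHom.ext_int _ _
  -- embeddings are determined by their value on b
  have hext : ∀ σ τ : K →ₐ[ℚ] ℂ, σ b = τ b → σ = τ := by
    intro σ τ h
    have pbgen : (IntermediateField.adjoin.powerBasis hβQ).gen = b :=
      IntermediateField.adjoin.powerBasis_gen hβQ
    exact PowerBasis.algHom_ext (IntermediateField.adjoin.powerBasis hβQ) (pbgen ▸ h)
  -- the set of "other" embeddings
  set s : Finset (K →ₐ[ℚ] ℂ) := Finset.univ.erase σ0 with hs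
  have hlt : ∀ σ ∈ s, ‖σ b‖ < 1 := by
    intro σ hσ
    refine hconj _ (hroot σ) ?_
    intro hcontra
    exact (Finset.mem_erase.mp hσ).1 (hext σ σ0 (by rw [hcontra, hσ0b]))
  -- key estimate: for every n, there is an integer m with
  -- |ξ β^n - m| ≤ ∑_{σ ∈ s} |σ x| |σ b|^n
  have hkey : ∀ n : ℕ, ∃ m : ℤ,
      |ξ * β ^ n - (m : ℝ)| ≤ ∑ σ ∈ s, ‖σ x‖ * ‖σ b‖ ^ n := by
    intro n
    obtain ⟨m, hm⟩ := htr (b ^ n) (by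
      have hβm : ((b : K) : ℝ) = β := rfl
      have hmem : β ∈ Algebra.adjoin ℤ ({β} : Set ℝ) := Algebra.subset_adjoin rfl
      show (((b ^ n : K) : ℝ)) ∈ Algebra.adjoin ℤ ({β} : Set ℝ)
      push_cast
      rw [hβm]
      exact pow_mem hmem n)
    refine ⟨m, ?_⟩
    have htrace : (algebraMap ℚ ℂ) (Algebra.trace ℚ K (b ^ n * x))
        = ∑ σ : K →ₐ[ℚ] ℂ, σ (b ^ n * x) := trace_eq_sum_embeddings (E := ℂ)
    rw [hm] at htrace
    have hsplit : ∑ σ : K →ₐ[ℚ] ℂ, σ (b ^ n * x)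
        = σ0 (b ^ n * x) + ∑ σ ∈ s, σ (b ^ n * x) :=
      (Finset.add_sum_erase _ _ (Finset.mem_univ σ0)).symm
    have hσ0v : σ0 (b ^ n * x) = ((ξ * β ^ n : ℝ) : ℂ) := by
      have e1 : σ0 (b ^ n * x) = (σ0 b) ^ n * σ0 x := by rw [map_mul, map_pow]
      have e2 : σ0 x = (ξ : ℂ) := rfl
      rw [e1, hσ0b, e2]; push_cast; ring
    rw [hsplit, hσ0v] at htrace
    have key : (((m : ℝ) - ξ * β ^ n : ℝ) : ℂ) = ∑ σ ∈ s, σ (b ^ n * x) := by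
      have h3 : ((m : ℂ)) = ((ξ * β ^ n : ℝ) : ℂ) + ∑ σ ∈ s, σ (b ^ n * x) := by
        rw [← htrace]; simp
      push_cast
      rw [h3]; push_cast; ring
    have habs : |(m : ℝ) - ξ * β ^ n| ≤ ∑ σ ∈ s, ‖σ x‖ * ‖σ b‖ ^ n := by
      calc |(m : ℝ) - ξ * β ^ n| = ‖(((m : ℝ) - ξ * β ^ n : ℝ) : ℂ)‖ :=
            by rw [Complex.norm_real, Real.norm_eq_abs]
        _ = ‖∑ σ ∈ s, σ (b ^ n * x)‖ := by rw [key]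
        _ ≤ ∑ σ ∈ s, ‖σ (b ^ n * x)‖ := norm_sum_le _ _
        _ = ∑ σ ∈ s, ‖σ x‖ * ‖σ b‖ ^ n := by
            refine Finset.sum_congr rfl fun σ _ => ?_
            rw [map_mul, norm_mul, map_pow, norm_pow, mul_comm]
    rwa [abs_sub_comm] at habs
  -- now split on whether there are other embeddings
  by_cases hne : s.Nonempty
  · set r : ℝ := s.sup' hne (fun σ => ‖σ b‖) with hr
    have hr0 : 0 ≤ r := by
      obtain ⟨σ1, hσ1⟩ := id hne
      exact (Finset.le_sup'_iff hne).mpr ⟨σ1, hσ1, norm_nonneg _⟩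
    have hr1 : r < 1 := (Finset.sup'_lt_iff hne).mpr hlt
    have hrb : ∀ σ ∈ s, ‖σ b‖ ≤ r := fun σ hσ =>
      (Finset.le_sup'_iff hne).mpr ⟨σ, hσ, le_rfl⟩
    set C : ℝ := 1 + ∑ σ ∈ s, ‖σ x‖ with hC
    have hsx : 0 ≤ ∑ σ ∈ s, ‖σ x‖ :=
      Finset.sum_nonneg fun σ _ => norm_nonneg _
    have hC0 : 0 < C := by rw [hC]; linarith
    refine ⟨C, r, hC0, hr0, hr1, fun n => ?_⟩
    obtain ⟨m, hm⟩ := hkey n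
    refine le_trans (round_le (ξ * β ^ n) m) (le_trans hm ?_)
    calc ∑ σ ∈ s, ‖σ x‖ * ‖σ b‖ ^ n
        ≤ ∑ σ ∈ s, ‖σ x‖ * r ^ n := by
          refine Finset.sum_le_sum fun σ hσ => ?_
          exact mul_le_mul_of_nonneg_left
            (pow_le_pow_left₀ (norm_nonneg _) (hrb σ hσ) n) (norm_nonneg _)
      _ = (∑ σ ∈ s, ‖σ x‖) * r ^ n := by rw [Finset.sum_mul]
      _ ≤ C * r ^ n := by
          refine mul_le_mul_of_nonneg_right ?_ (pow_nonneg hr0 n)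
          rw [hC]; linarith
  · refine ⟨1, 1/2, one_pos, by norm_num, by norm_num, fun n => ?_⟩
    obtain ⟨m, hm⟩ := hkey n
    rw [Finset.not_nonempty_iff_eq_empty.mp hne, Finset.sum_empty] at hm
    refine le_trans (round_le (ξ * β ^ n) m) (le_trans hm ?_)
    positivity
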